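/- Let ε ∈ (0,1), let m ≤ k ≤ n be positive integers with k ≥ 4m/ε + (12/ε²)·log(1/ε), and let a_1,…,a_n ∈ ℝ^m. For every x ∈ [0,1]^n with Σ_{i∈[n]} x_i = k there exists a subset S ⊆ [n] with |S| = k such that det(Σ_{i∈S} a_i a_iᵀ) ≥ (1−ε)^m · det(Σ_{i∈[n]} x_i a_i a_iᵀ); hence the D-optimal design problem without repetitions admits a (1−ε)-approximation. -/

import Mathlib

open Matrix Finset

variable {m n : ℕ}

noncomputable def cBT (a : Fin n → Fin m → ℝ) (T : Finset (Fin n)) : ℝ :=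
  if h : T.card = m then
    (Matrix.det (Matrix.of fun j i => a (T.orderEmbOfFin h j) i)) ^ 2
  else 0

lemma cBT_nonneg (a : Fin n → Fin m → ℝ) (T : Finset (Fin n)) : 0 ≤ cBT a T := by
  unfold cBT; split
  · positivity
  · exact le_refl 0

lemma image_orderEmbOfFin (T : Finset (Fin n)) (h : T.card = m) :
    Finset.image (T.orderEmbOfFin h) univ = T := by
  apply Finset.eq_of_subset_of_card_le
  · intro x hx
    simp only [Finset.mem_image] at hx
    obtain ⟨j, _, rfl⟩ := hx
    exact T.orderEmbOfFin_mem h j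
  · rw [Finset.card_image_of_injective _ (T.orderEmbOfFin h).injective, h, card_univ,
      Fintype.card_fin]

lemma cauchy_binet (a : Fin n → Fin m → ℝ) (w : Fin n → ℝ) :
    (∑ i, w i • vecMulVec (a i) (a i)).det
      = ∑ T ∈ powersetCard m (univ : Finset (Fin n)), (∏ i ∈ T, w i) * cBT a T := by
  classical
  -- rewrite as rows
  have hrows : (∑ i, w i • vecMulVec (a i) (a i)) =
      fun j => ∑ i, (w i * a i j) • a i := by
    funext j j'
    rw [Matrix.sum_apply]
    simp [vecMulVec, mul_assoc, mul_comm, mul_left_comm]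
  have hdet : (∑ i, w i • vecMulVec (a i) (a i)).det
      = ∑ f : Fin m → Fin n, (∏ j, (w (f j) * a (f j) j)) * Matrix.det (Matrix.of fun j => a (f j)) := by
    rw [hrows]
    show (Matrix.detRowAlternating fun j => ∑ i, (w i * a i j) • a i) = _
    have h1 := (Matrix.detRowAlternating (R := ℝ) (n := Fin m)).toMultilinearMap.map_sum
      (g := fun j i => (w i * a i j) • a i)
    simp only [AlternatingMap.coe_multilinearMap] at h1
    rw [h1]
    refine Finset.sum_congr rfl fun f _ => ?_
    have h2 := (Matrix.detRowAlternating (R := ℝ) (n := Fin m)).toMultilinearMap.map_smul_univ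
      (fun j => w (f j) * a (f j) j) (fun j => a (f j))
    simp only [AlternatingMap.coe_multilinearMap] at h2
    rw [h2, smul_eq_mul]
    rfl
  rw [hdet]
  have hzero : ∀ f : Fin m → Fin n, ¬ Function.Injective f →
      (∏ j, (w (f j) * a (f j) j)) * Matrix.det (Matrix.of fun j => a (f j)) = 0 := by
    intro f hf
    rw [Function.not_injective_iff] at hf
    obtain ⟨j₁, j₂, hval, hne⟩ := hf
    have : Matrix.det (Matrix.of fun j => a (f j)) = 0 :=
      Matrix.det_zero_of_row_eq hne (by funext i; rw [Matrix.of_apply, Matrix.of_apply, hval])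
    rw [this, mul_zero]
  have hfilter : ∑ f : Fin m → Fin n, (∏ j, (w (f j) * a (f j) j)) * Matrix.det (Matrix.of fun j => a (f j))
      = ∑ f ∈ univ.filter (fun f : Fin m → Fin n => Function.Injective f),
          (∏ j, (w (f j) * a (f j) j)) * Matrix.det (Matrix.of fun j => a (f j)) := by
    rw [Finset.sum_filter_of_ne]
    intro f _ hval
    by_contra hinj
    exact hval (hzero f hinj)
  rw [hfilter]
  rw [← Finset.sum_fiberwise_of_maps_to (g := fun f : Fin m → Fin n => Finset.image f univ)
    (t := powersetCard m (univ : Finset (Fin n)))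
    (fun f hf => by
      rw [Finset.mem_powersetCard_univ]
      rw [Finset.card_image_of_injective _ (Finset.mem_filter.mp hf).2]
      simp)]
  refine Finset.sum_congr rfl fun T hT => ?_
  have hTm : T.card = m := Finset.mem_powersetCard_univ.mp hT
  have hem : ∀ j, T.orderEmbOfFin hTm j ∈ T := fun j => T.orderEmbOfFin_mem hTm j
  have himg : Finset.image (T.orderEmbOfFin hTm) univ = T := image_orderEmbOfFin T hTm
  -- the bijection with permutations
  have hkey : ∑ f ∈ (univ.filter fun f : Fin m → Fin n => Function.Injective f).filter
        (fun f => Finset.image f univ = T),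
        (∏ j, (w (f j) * a (f j) j)) * Matrix.det (Matrix.of fun j => a (f j))
      = ∑ σ : Equiv.Perm (Fin m),
        (∏ j, (w ((T.orderEmbOfFin hTm) (σ j)) * a ((T.orderEmbOfFin hTm) (σ j)) j)) *
          Matrix.det (Matrix.of fun j => a ((T.orderEmbOfFin hTm) (σ j))) := by
    have hmemT : ∀ f : Fin m → Fin n, f ∈ (univ.filter fun f : Fin m → Fin n =>
        Function.Injective f).filter (fun f => Finset.image f univ = T) → ∀ j, f j ∈ T := by
      intro f hf j
      have := (Finset.mem_filter.mp hf).2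
      rw [← this]
      exact Finset.mem_image_of_mem f (Finset.mem_univ j)
    have hinjf : ∀ f : Fin m → Fin n, f ∈ (univ.filter fun f : Fin m → Fin n =>
        Function.Injective f).filter (fun f => Finset.image f univ = T) →
        Function.Injective f := fun f hf =>
      (Finset.mem_filter.mp (Finset.mem_filter.mp hf).1).2
    have hEOS : ∀ (g : Fin m → Fin n) (hg : ∀ j, g j ∈ T) (j : Fin m),
        (T.orderEmbOfFin hTm) ((T.orderIsoOfFin hTm).symm ⟨g j, hg j⟩) = g j := by
      intro g hg j
      exact congrArg Subtype.val ((T.orderIsoOfFin hTm).apply_symm_apply ⟨g j, hg j⟩)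
    refine (Finset.sum_bij'
      (i := fun (σ : Equiv.Perm (Fin m)) (_ : σ ∈ (univ : Finset (Equiv.Perm (Fin m)))) =>
        (fun j => (T.orderEmbOfFin hTm) (σ j)))
      (j := fun f hf => Equiv.ofBijective
        (fun j => (T.orderIsoOfFin hTm).symm ⟨f j, hmemT f hf j⟩)
        (Finite.injective_iff_bijective.mp (fun j₁ j₂ hj =>
          hinjf f hf (congrArg Subtype.val
            ((T.orderIsoOfFin hTm).symm.injective hj) : f j₁ = f j₂))))
      ?_ ?_ ?_ ?_ ?_).symm
    · intro σ _
      rw [Finset.mem_filter, Finset.mem_filter]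
      refine ⟨⟨Finset.mem_univ _, (T.orderEmbOfFin hTm).injective.comp σ.injective⟩, ?_⟩
      rw [show Finset.image (fun j => (T.orderEmbOfFin hTm) (σ j)) univ
          = Finset.image (T.orderEmbOfFin hTm) (Finset.image σ univ) by
            rw [Finset.image_image]; rfl, Finset.image_univ_equiv, himg]
    · intro f hf; exact Finset.mem_univ _
    · intro σ _
      refine Equiv.ext fun j => ?_
      rw [Equiv.ofBijective_apply]
      refine (T.orderIsoOfFin hTm).toEquiv.symm_apply_eq.mpr (Subtype.ext ?_)
      exact (T.coe_orderIsoOfFin_apply hTm (σ j)).symm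
    · intro f hf
      funext j
      simp only [Equiv.ofBijective_apply]
      exact hEOS f (hmemT f hf) j
    · intro σ _
      rfl
  rw [hkey]
  -- now compute the permutation sum
  set e := T.orderEmbOfFin hTm
  set N : Matrix (Fin m) (Fin m) ℝ := Matrix.of fun j i => a (e j) i with hN
  have hperm : ∀ σ : Equiv.Perm (Fin m),
      Matrix.det (Matrix.of fun j => a (e (σ j))) = (Equiv.Perm.sign σ : ℤ) * N.det := by
    intro σ
    have : (Matrix.of fun j => a (e (σ j))) = N.submatrix σ id := rfl
    rw [this, Matrix.det_permute]
  have hprodw : ∀ σ : Equiv.Perm (Fin m), (∏ j, w (e (σ j))) = ∏ i ∈ T, w i := by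
    intro σ
    rw [Equiv.prod_comp σ (fun j => w (e j)), ← himg,
      Finset.prod_image (fun x _ y _ hxy => e.injective hxy)]
  calc ∑ σ : Equiv.Perm (Fin m),
        (∏ j, (w (e (σ j)) * a (e (σ j)) j)) * Matrix.det (Matrix.of fun j => a (e (σ j)))
      = (∏ i ∈ T, w i) * ∑ σ : Equiv.Perm (Fin m),
          ((Equiv.Perm.sign σ : ℤ) : ℝ) * (∏ j, a (e (σ j)) j) * N.det := by
        rw [Finset.mul_sum]
        refine Finset.sum_congr rfl fun σ _ => ?_
        rw [Finset.prod_mul_distrib, hprodw σ, hperm σ]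
        push_cast
        ring
    _ = (∏ i ∈ T, w i) * cBT a T := by
        congr 1
        rw [← Finset.sum_mul]
        have : ∑ σ : Equiv.Perm (Fin m), ((Equiv.Perm.sign σ : ℤ) : ℝ) * ∏ j, a (e (σ j)) j = N.det := by
          rw [Matrix.det_apply]
          push_cast
          refine Finset.sum_congr rfl fun σ _ => ?_
          simp [N, Units.smul_def, zsmul_eq_mul]
        rw [this]
        unfold cBT
        rw [dif_pos hTm]
        ring


noncomputable def Wt (q : Fin n → ℝ) (F s : Finset (Fin n)) : ℝ :=
  (∏ i ∈ s, q i) * ∏ i ∈ F \ s, (1 - q i)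

lemma Wt_nonneg {q : Fin n → ℝ} (hq0 : ∀ i, 0 ≤ q i) (hq1 : ∀ i, q i ≤ 1)
    (F s : Finset (Fin n)) : 0 ≤ Wt q F s := by
  unfold Wt
  apply mul_nonneg
  · exact Finset.prod_nonneg fun i _ => hq0 i
  · exact Finset.prod_nonneg fun i _ => by linarith [hq1 i]

lemma Wt_sum_one (q : Fin n → ℝ) (F : Finset (Fin n)) :
    ∑ s ∈ F.powerset, Wt q F s = 1 := by
  unfold Wt
  rw [← Finset.prod_add]
  simp

lemma Wt_chernoff {q : Fin n → ℝ} (hq0 : ∀ i, 0 ≤ q i) (hq1 : ∀ i, q i ≤ 1)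
    (F : Finset (Fin n)) (t B α : ℝ) (ht : 0 ≤ t) (hB : ∑ i ∈ F, q i ≤ B) :
    ∑ s ∈ F.powerset.filter (fun s => α ≤ (s.card : ℝ)), Wt q F s
      ≤ Real.exp (B * (Real.exp t - 1) - t * α) := by
  have het1 : (0:ℝ) ≤ Real.exp t - 1 := by
    have := Real.one_le_exp ht
    linarith
  have step1 : ∑ s ∈ F.powerset.filter (fun s => α ≤ (s.card : ℝ)), Wt q F s
      ≤ ∑ s ∈ F.powerset, Real.exp (t * s.card - t * α) * Wt q F s := by
    refine le_trans (Finset.sum_le_sum fun s hs => ?_)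
      (Finset.sum_le_sum_of_subset_of_nonneg (Finset.filter_subset _ _) fun s hs _ =>
        mul_nonneg (Real.exp_nonneg _) (Wt_nonneg hq0 hq1 F s))
    have hcard : α ≤ (s.card : ℝ) := (Finset.mem_filter.mp hs).2
    have h1 : (1:ℝ) ≤ Real.exp (t * s.card - t * α) := by
      apply Real.one_le_exp
      have : t * α ≤ t * s.card := mul_le_mul_of_nonneg_left hcard ht
      linarith
    nlinarith [Wt_nonneg hq0 hq1 F s]
  have step2 : ∑ s ∈ F.powerset, Real.exp (t * s.card - t * α) * Wt q F s
      = Real.exp (-(t*α)) * ∏ i ∈ F, (Real.exp t * q i + (1 - q i)) := by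
    rw [Finset.prod_add, Finset.mul_sum]
    refine Finset.sum_congr rfl fun s hs => ?_
    unfold Wt
    have : Real.exp (t * s.card - t * α) = Real.exp (-(t*α)) * (Real.exp t) ^ (s.card : ℕ) := by
      rw [← Real.exp_nat_mul, ← Real.exp_add]
      ring_nf
    rw [this]
    rw [show ∏ i ∈ s, Real.exp t * q i = (Real.exp t) ^ (s.card : ℕ) * ∏ i ∈ s, q i by
      rw [Finset.prod_mul_distrib, Finset.prod_const]]
    ring
  have step3 : ∏ i ∈ F, (Real.exp t * q i + (1 - q i))
      ≤ Real.exp (B * (Real.exp t - 1)) := by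
    calc ∏ i ∈ F, (Real.exp t * q i + (1 - q i))
        ≤ ∏ i ∈ F, Real.exp (q i * (Real.exp t - 1)) := by
          apply Finset.prod_le_prod
          · intro i _
            have := hq0 i; have := hq1 i
            nlinarith [Real.exp_nonneg t]
          · intro i _
            have h := Real.add_one_le_exp (q i * (Real.exp t - 1))
            nlinarith
      _ = Real.exp (∑ i ∈ F, q i * (Real.exp t - 1)) := (Real.exp_sum F _).symm
      _ ≤ Real.exp (B * (Real.exp t - 1)) := by
          apply Real.exp_le_exp.mpr
          rw [← Finset.sum_mul]
          exact mul_le_mul_of_nonneg_right hB het1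
  calc ∑ s ∈ F.powerset.filter (fun s => α ≤ (s.card : ℝ)), Wt q F s
      ≤ Real.exp (-(t*α)) * ∏ i ∈ F, (Real.exp t * q i + (1 - q i)) := by
        rw [← step2]; exact step1
    _ ≤ Real.exp (-(t*α)) * Real.exp (B * (Real.exp t - 1)) :=
        mul_le_mul_of_nonneg_left step3 (Real.exp_nonneg _)
    _ = Real.exp (B * (Real.exp t - 1) - t * α) := by
        rw [← Real.exp_add]; ring_nf

lemma Wt_factor (q : Fin n → ℝ) (T : Finset (Fin n)) (φ : Finset (Fin n) → ℝ) :
    ∑ s ∈ (univ : Finset (Fin n)).powerset.filter (fun s => T ⊆ s), Wt q univ s * φ s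
      = (∏ i ∈ T, q i) *
        ∑ s' ∈ (univ \ T).powerset, Wt q (univ \ T) s' * φ (s' ∪ T) := by
  rw [Finset.mul_sum]
  refine Finset.sum_bij' (i := fun s (_ : s ∈ _) => s \ T) (j := fun s' (_ : s' ∈ _) => s' ∪ T)
    ?_ ?_ ?_ ?_ ?_
  · intro s hs
    rw [Finset.mem_powerset]
    exact Finset.sdiff_subset_sdiff (Finset.subset_univ s) Finset.Subset.rfl
  · intro s' hs'
    rw [Finset.mem_filter, Finset.mem_powerset]
    exact ⟨Finset.subset_univ _, Finset.subset_union_right⟩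
  · intro s hs
    exact Finset.sdiff_union_of_subset (Finset.mem_filter.mp hs).2
  · intro s' hs'
    have hdisj : Disjoint s' T := by
      have := Finset.mem_powerset.mp hs'
      exact Finset.disjoint_of_subset_left this Finset.sdiff_disjoint
    show (s' ∪ T) \ T = s'
    rw [Finset.union_sdiff_cancel_right hdisj]
  · intro s hs
    have hTs : T ⊆ s := (Finset.mem_filter.mp hs).2
    have hs_eq : (s \ T) ∪ T = s := Finset.sdiff_union_of_subset hTs
    show Wt q univ s * φ s = (∏ i ∈ T, q i) * (Wt q (univ \ T) (s \ T) * φ ((s \ T) ∪ T))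
    rw [hs_eq]
    unfold Wt
    have hprod : ∏ i ∈ s, q i = (∏ i ∈ T, q i) * ∏ i ∈ s \ T, q i := by
      rw [mul_comm, Finset.prod_sdiff hTs]
    have hsd : univ \ s = (univ \ T) \ (s \ T) := by
      ext i
      simp only [Finset.mem_sdiff, Finset.mem_univ, true_and]
      constructor
      · intro hi
        exact ⟨fun hT => hi (hTs hT), fun ⟨his, _⟩ => hi his⟩
      · intro ⟨hiT, hi⟩ his
        exact hi ⟨his, hiT⟩
    rw [hprod, hsd]
    ring


lemma exp_cubic_bound {v : ℝ} (h0 : 0 ≤ v) (h1 : v ≤ 1) :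
    Real.exp v ≤ 1 + v + v^2/2 + 2/9*v^3 := by
  have h := Real.exp_bound (x := v) (by rwa [abs_of_nonneg h0]) (n := 3) (by norm_num)
  have hsum : ∑ i ∈ Finset.range 3, v ^ i / (Nat.factorial i : ℝ) = 1 + v + v^2/2 := by
    rw [Finset.sum_range_succ, Finset.sum_range_succ, Finset.sum_range_succ,
      Finset.sum_range_zero]
    norm_num [Nat.factorial]
  rw [hsum, abs_of_nonneg h0] at h
  have h' := abs_le.mp h
  have hc : ((Nat.succ 3 : ℕ) : ℝ) / ((Nat.factorial 3 : ℝ) * ((3:ℕ):ℝ)) = 2/9 := by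
    norm_num [Nat.factorial]
  nlinarith [h'.2, pow_nonneg h0 3, hc]

lemma one_sub_mul_exp_le {v : ℝ} (h0 : 0 ≤ v) (h1 : v ≤ 1) :
    (1 - v) * Real.exp (v + v^2/2) ≤ 1 := by
  have hv3 := exp_cubic_bound h0 h1
  have h2 : (1 - v) * Real.exp v ≤ 1 - v^2/2 := by nlinarith [Real.exp_pos v]
  have h3 : (1 - v^2/2) * Real.exp (v^2/2) ≤ 1 := by
    have hle : 1 - v^2/2 ≤ (Real.exp (v^2/2))⁻¹ := by
      have := Real.add_one_le_exp (-(v^2/2))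
      rw [Real.exp_neg] at this
      linarith
    calc (1 - v^2/2) * Real.exp (v^2/2)
        ≤ (Real.exp (v^2/2))⁻¹ * Real.exp (v^2/2) :=
          mul_le_mul_of_nonneg_right hle (Real.exp_nonneg _)
      _ = 1 := inv_mul_cancel₀ (Real.exp_pos _).ne'
  calc (1 - v) * Real.exp (v + v^2/2) = ((1 - v) * Real.exp v) * Real.exp (v^2/2) := by
        rw [Real.exp_add]; ring
    _ ≤ (1 - v^2/2) * Real.exp (v^2/2) :=
        mul_le_mul_of_nonneg_right h2 (Real.exp_nonneg _)
    _ ≤ 1 := h3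

lemma log_quad {v : ℝ} (h0 : 0 ≤ v) (h1 : v < 1) :
    Real.log (1 - v) ≤ -(v + v^2/2) := by
  have h2 : 1 - v ≤ Real.exp (-(v + v^2/2)) := by
    have hmain := one_sub_mul_exp_le h0 h1.le
    have hE := Real.exp_pos (v + v^2/2)
    rw [Real.exp_neg, ← sub_nonneg]
    have : (Real.exp (v + v^2/2))⁻¹ - (1-v)
        = ((1 - (1-v) * Real.exp (v + v^2/2))) * (Real.exp (v + v^2/2))⁻¹ := by
      field_simp
    rw [this]
    exact mul_nonneg (by linarith) (inv_nonneg.mpr hE.le)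
  calc Real.log (1 - v) ≤ Real.log (Real.exp (-(v + v^2/2))) :=
        Real.log_le_log (by linarith) h2
    _ = -(v + v^2/2) := Real.log_exp _

lemma poly_ge {e : ℝ} (h0 : 0 ≤ e) (h1 : e ≤ 1) :
    Real.log 2 ≤ 3/4 + e/16 - e^2/4 + 3/16*e^3 := by
  have hl2 : Real.log 2 < 0.6931471808 := Real.log_two_lt_d9
  nlinarith [sq_nonneg (e - 3/4), mul_nonneg (sq_nonneg (e - 3/4)) h0,
    mul_nonneg (sq_nonneg (e - 3/4)) (sub_nonneg.mpr h1), sq_nonneg e,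
    mul_nonneg (mul_nonneg h0 h0) h0]


set_option maxHeartbeats 1000000 in
lemma NL (ε : ℝ) (hε0 : 0 < ε) (hε1 : ε < 1) (m k : ℕ) (hm : 1 ≤ m) (hmk : m ≤ k)
    (hk : (k : ℝ) ≥ 4 * m / ε + 12 / ε ^ 2 * Real.log (1 / ε)) :
    Real.exp ((1 - ε/2) * k * (Real.exp (ε/2) - 1) - (ε/2) * ((k:ℝ) - m))
      ≤ 1 - ((1-ε)/(1-ε/2))^m := by
  set u : ℝ := ε/2 with hu
  set L : ℝ := Real.log (1/ε) with hLdef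
  have hL : L = -Real.log ε := by rw [hLdef, one_div, Real.log_inv]
  have hLpos : 0 ≤ L := Real.log_nonneg (by rw [le_div_iff₀ hε0]; linarith)
  have hu0 : 0 < u := by positivity
  have hu1 : u ≤ 1/2 := by rw [hu]; linarith
  have hm1 : (1:ℝ) ≤ (m:ℝ) := by exact_mod_cast hm
  -- Step A: bound the exponent
  have hexp := exp_cubic_bound hu0.le (by linarith)
  have hC : (1-u) * (Real.exp u - 1) - u ≤ -u^2/2 - u^3/4 := by
    have h1u' : (0:ℝ) ≤ 1 - u := by linarith
    have hmul : (1-u) * (Real.exp u - 1) ≤ (1-u) * (u + u^2/2 + 2/9*u^3) :=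
      mul_le_mul_of_nonneg_left (by linarith) h1u'
    nlinarith [pow_nonneg hu0.le 3, pow_nonneg hu0.le 4]
  have hexp1 : 1 + u ≤ Real.exp u := by linarith [Real.add_one_le_exp u]
  have hkk : 2*(m:ℝ)/u + 3*L/u^2 ≤ (k:ℝ) := by
    have h4 : 4 * (m:ℝ) / ε = 2*(m:ℝ)/u := by rw [hu]; ring_nf
    have h12 : 12 / ε^2 * L = 3*L/u^2 := by rw [hu]; field_simp; ring
    rw [ge_iff_le, h4, h12] at hk
    exact hk
  have hEeq : (1 - u) * k * (Real.exp u - 1) - u * ((k:ℝ) - m)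
      = (k:ℝ) * ((1-u) * (Real.exp u - 1) - u) + u * m := by ring
  have hCneg : (1-u) * (Real.exp u - 1) - u ≤ 0 := by
    nlinarith [hC, sq_nonneg u, pow_nonneg hu0.le 3]
  have hbound_nonneg : (0:ℝ) ≤ 2*(m:ℝ)/u + 3*L/u^2 := by positivity
  have hstep1 : (k:ℝ) * ((1-u) * (Real.exp u - 1) - u)
      ≤ (2*(m:ℝ)/u + 3*L/u^2) * ((1-u) * (Real.exp u - 1) - u) :=
    mul_le_mul_of_nonpos_right hkk hCneg
  have hstep2 : (2*(m:ℝ)/u + 3*L/u^2) * ((1-u) * (Real.exp u - 1) - u)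
      ≤ (2*(m:ℝ)/u + 3*L/u^2) * (-u^2/2 - u^3/4) :=
    mul_le_mul_of_nonneg_left hC hbound_nonneg
  have hstep3 : (2*(m:ℝ)/u + 3*L/u^2) * (-u^2/2 - u^3/4) + u * m
      = -(3/2 + 3/4*u)*L - u^2*(m:ℝ)/2 := by
    field_simp
    ring
  have hE : (1 - u) * k * (Real.exp u - 1) - u * ((k:ℝ) - m)
      ≤ -(3/2 + 3/4*u)*L - u^2/2 := by
    have hmm : -(3/2 + 3/4*u)*L - u^2*(m:ℝ)/2 ≤ -(3/2 + 3/4*u)*L - u^2/2 := by nlinarith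
    rw [hEeq]
    calc (k:ℝ) * ((1-u) * (Real.exp u - 1) - u) + u * m
        ≤ (2*(m:ℝ)/u + 3*L/u^2) * (-u^2/2 - u^3/4) + u * m := by linarith
      _ = -(3/2 + 3/4*u)*L - u^2*(m:ℝ)/2 := hstep3
      _ ≤ -(3/2 + 3/4*u)*L - u^2/2 := hmm
  -- Step C : the one-variable inequality
  have hvlog1 : Real.log ε ≤ -((1-ε) + (1-ε)^2/2) := by
    have := log_quad (v := 1-ε) (by linarith) (by linarith)
    rw [show (1:ℝ) - (1-ε) = ε by ring] at this
    exact this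
  have hvlog2 : Real.log (1-u) ≤ -(u + u^2/2) := log_quad hu0.le (by linarith)
  have hpoly := poly_ge hε0.le hε1.le
  have hlogu : Real.log u = -L - Real.log 2 := by
    rw [hu, hL]
    rw [Real.log_div hε0.ne' two_ne_zero]
    ring
  have h1u : (0:ℝ) < 1 - u := by linarith
  have hgoal_exp : -(3/2 + 3/4*u)*L - u^2/2 ≤ Real.log (u/(1-u)) := by
    rw [Real.log_div hu0.ne' h1u.ne', hlogu]
    have hLge : (1-ε) + (1-ε)^2/2 ≤ L := by rw [hL]; linarith
    have hcoef : (0:ℝ) ≤ 1/2 + 3/4*u := by linarith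
    have hkey : Real.log 2 ≤ (1/2 + 3/4*u)*L + u^2/2 + (u + u^2/2) := by
      have hLL : (1/2 + 3/4*u)*((1-ε) + (1-ε)^2/2) ≤ (1/2 + 3/4*u)*L :=
        mul_le_mul_of_nonneg_left hLge hcoef
      have hps : (1/2 + 3/4*u)*((1-ε) + (1-ε)^2/2) + u^2/2 + (u + u^2/2)
          = 3/4 + ε/16 - ε^2/4 + 3/16*ε^3 := by rw [hu]; ring
      linarith [hpoly, hLL, hps.le, hps.ge]
    linarith [hvlog2]
  have hexp_le : Real.exp ((1 - u) * k * (Real.exp u - 1) - u * ((k:ℝ) - m)) ≤ u/(1-u) := by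
    rw [← Real.le_log_iff_exp_le (by positivity)]
    linarith [hE, hgoal_exp]
  -- Step D: conclude
  have hρ0 : (0:ℝ) ≤ (1-ε)/(1-u) := by
    apply div_nonneg (by linarith) h1u.le
  have hρ1 : (1-ε)/(1-u) ≤ 1 := by
    rw [div_le_one h1u]; linarith
  have hρm : ((1-ε)/(1-u))^m ≤ (1-ε)/(1-u) := by
    calc ((1-ε)/(1-u))^m ≤ ((1-ε)/(1-u))^1 := pow_le_pow_of_le_one hρ0 hρ1 hm
      _ = (1-ε)/(1-u) := pow_one _
  have hrho : u/(1-u) = 1 - (1-ε)/(1-u) := by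
    field_simp
    ring
  calc Real.exp ((1 - u) * k * (Real.exp u - 1) - u * ((k:ℝ) - m))
      ≤ u/(1-u) := hexp_le
    _ = 1 - (1-ε)/(1-u) := hrho
    _ ≤ 1 - ((1-ε)/(1-u))^m := by linarith


lemma det_indicator (a : Fin n → Fin m → ℝ) (s : Finset (Fin n)) :
    (∑ i ∈ s, vecMulVec (a i) (a i)).det
      = ∑ T ∈ (powersetCard m (univ : Finset (Fin n))).filter (fun T => T ⊆ s), cBT a T := by
  classical
  have h1 : (∑ i ∈ s, vecMulVec (a i) (a i))
      = ∑ i, (if i ∈ s then (1:ℝ) else 0) • vecMulVec (a i) (a i) := by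
    rw [Finset.sum_congr rfl (fun i (_ : i ∈ (univ : Finset (Fin n))) => by
      rw [ite_smul, one_smul, zero_smul])]
    rw [Finset.sum_ite_mem, Finset.univ_inter]
  rw [h1, cauchy_binet]
  rw [Finset.sum_filter]
  refine Finset.sum_congr rfl fun T hT => ?_
  rw [Finset.prod_boole]
  by_cases h : T ⊆ s
  · rw [if_pos h, if_pos (fun i hi => h hi), one_mul]
  · rw [if_neg h, if_neg (fun hall => h (fun i hi => hall i hi)), zero_mul]


set_option maxHeartbeats 1600000 in
theorem stmt9 (ε : ℝ) (hε : ε ∈ Set.Ioo (0 : ℝ) 1) (m k n : ℕ) (hm : 1 ≤ m)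
    (hmk : m ≤ k) (hkn : k ≤ n)
    (hk : (k : ℝ) ≥ 4 * m / ε + 12 / ε ^ 2 * Real.log (1 / ε))
    (a : Fin n → Fin m → ℝ) (x : Fin n → ℝ)
    (hx : ∀ i, x i ∈ Set.Icc (0 : ℝ) 1) (hxs : ∑ i, x i = (k : ℝ)) :
    ∃ S : Finset (Fin n), S.card = k ∧
      (∑ i ∈ S, vecMulVec (a i) (a i)).det
        ≥ (1 - ε) ^ m * (∑ i, x i • vecMulVec (a i) (a i)).det := by
  classical
  obtain ⟨hε0, hε1⟩ := hε
  set u : ℝ := ε/2 with hu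
  have hu0 : 0 < u := by rw [hu]; linarith
  have h1u : (0:ℝ) < 1 - u := by rw [hu]; linarith
  set q : Fin n → ℝ := fun i => (1-u) * x i with hqdef
  have hq0 : ∀ i, 0 ≤ q i := fun i => mul_nonneg h1u.le (hx i).1
  have hq1 : ∀ i, q i ≤ 1 := fun i => by
    have h2 := (hx i).2
    have h3 := (hx i).1
    have : q i = (1-u) * x i := rfl
    nlinarith
  have hqsum : ∑ i, q i = (1-u) * (k:ℝ) := by
    rw [show (∑ i, q i) = ∑ i, (1-u) * x i from rfl, ← Finset.mul_sum, hxs]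
  set η : ℝ := Real.exp ((1 - u) * k * (Real.exp u - 1) - u * ((k:ℝ) - m)) with hηdef
  have hNL : η ≤ 1 - ((1-ε)/(1-u))^m := NL ε hε0 hε1 m k hm hmk hk
  have hρ0 : (0:ℝ) ≤ ((1-ε)/(1-u))^m :=
    pow_nonneg (div_nonneg (by linarith) h1u.le) m
  have hη1 : η ≤ 1 := by linarith
  have hη0 : 0 < η := Real.exp_pos _
  set 𝒯 := (powersetCard m (univ : Finset (Fin n))) with h𝒯
  set c := cBT a with hcdef
  have hcnn : ∀ T, 0 ≤ c T := fun T => cBT_nonneg a T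
  obtain ⟨S₀, hS₀mem, hS₀max⟩ := Finset.exists_max_image
    (powersetCard k (univ : Finset (Fin n)))
    (fun S => (∑ i ∈ S, vecMulVec (a i) (a i)).det)
    (Finset.powersetCard_nonempty.mpr (by simpa using hkn))
  have hS₀card : S₀.card = k := Finset.mem_powersetCard_univ.mp hS₀mem
  refine ⟨S₀, hS₀card, ?_⟩
  set dS : Finset (Fin n) → ℝ := fun s => (∑ i ∈ s, vecMulVec (a i) (a i)).det with hdSdef
  have hdSf : ∀ s, dS s = ∑ T ∈ 𝒯.filter (fun T => T ⊆ s), c T := fun s => det_indicator a s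
  have hdS0 : ∀ s, 0 ≤ dS s := fun s => by
    rw [hdSf]; exact Finset.sum_nonneg fun T _ => hcnn T
  have hmono : ∀ s : Finset (Fin n), s.card ≤ k → dS s ≤ dS S₀ := by
    intro s hsk
    obtain ⟨S, hsS, hScard⟩ := Finset.exists_superset_card_eq hsk (by simpa using hkn)
    calc dS s ≤ dS S := by
          rw [hdSf, hdSf]
          apply Finset.sum_le_sum_of_subset_of_nonneg
          · intro T hT
            rw [Finset.mem_filter] at hT ⊢
            exact ⟨hT.1, hT.2.trans hsS⟩
          · exact fun T _ _ => hcnn T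
      _ ≤ dS S₀ := hS₀max S (Finset.mem_powersetCard_univ.mpr hScard)
  set W : Finset (Fin n) → ℝ := Wt q univ with hWdef
  have hWnn : ∀ s, 0 ≤ W s := fun s => Wt_nonneg hq0 hq1 univ s
  set φk : Finset (Fin n) → ℝ := fun s => if s.card ≤ k then 1 else 0 with hφdef
  set X := ∑ s ∈ (univ : Finset (Fin n)).powerset, W s * (φk s * dS s) with hXdef
  -- Step 1 : X is at most the best subset value
  have main1 : X ≤ dS S₀ := by
    calc X ≤ ∑ s ∈ (univ : Finset (Fin n)).powerset, W s * dS S₀ := by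
          apply Finset.sum_le_sum
          intro s _
          apply mul_le_mul_of_nonneg_left _ (hWnn s)
          by_cases hsk : s.card ≤ k
          · rw [show φk s = 1 from if_pos hsk, one_mul]
            exact hmono s hsk
          · rw [show φk s = 0 from if_neg hsk, zero_mul]
            exact hdS0 S₀
      _ = dS S₀ := by rw [← Finset.sum_mul, Wt_sum_one q univ, one_mul]
  -- Step 2 : rewrite X by exchanging sums
  have main2 : X = ∑ T ∈ 𝒯, c T *
      ∑ s ∈ (univ : Finset (Fin n)).powerset.filter (fun s => T ⊆ s), W s * φk s := by
    rw [hXdef]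
    have hterm : ∀ s, W s * (φk s * dS s)
        = ∑ T ∈ 𝒯, (if T ⊆ s then W s * φk s * c T else 0) := by
      intro s
      rw [hdSf s, Finset.mul_sum, Finset.mul_sum, ← Finset.sum_filter]
      refine Finset.sum_congr rfl fun T _ => by ring
    rw [Finset.sum_congr rfl fun s _ => hterm s, Finset.sum_comm]
    refine Finset.sum_congr rfl fun T _ => ?_
    rw [← Finset.sum_filter, Finset.mul_sum]
    refine Finset.sum_congr rfl fun s _ => by ring
  -- Step 3 : lower bound for each T
  have main3 : ∀ T ∈ 𝒯, (∏ i ∈ T, q i) * (1 - η)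
      ≤ ∑ s ∈ (univ : Finset (Fin n)).powerset.filter (fun s => T ⊆ s), W s * φk s := by
    intro T hT
    have hTm : T.card = m := Finset.mem_powersetCard_univ.mp hT
    have hfac := Wt_factor q T φk
    rw [hfac]
    have hqT : 0 ≤ ∏ i ∈ T, q i := Finset.prod_nonneg fun i _ => hq0 i
    apply mul_le_mul_of_nonneg_left _ hqT
    set F := (univ : Finset (Fin n)) \ T with hF
    have hcard_union : ∀ s' ∈ F.powerset, (s' ∪ T).card = s'.card + m := by
      intro s' hs'
      have hsub : s' ⊆ F := Finset.mem_powerset.mp hs'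
      have hdisj : Disjoint s' T :=
        Finset.disjoint_of_subset_left hsub Finset.sdiff_disjoint
      rw [Finset.card_union_of_disjoint hdisj, hTm]
    have hsplit := Finset.sum_filter_add_sum_filter_not F.powerset
      (fun s' => s'.card + m ≤ k) (fun s' => Wt q F s' * φk (s' ∪ T))
    have hgood : ∑ s' ∈ F.powerset.filter (fun s' => s'.card + m ≤ k),
        Wt q F s' * φk (s' ∪ T)
        = ∑ s' ∈ F.powerset.filter (fun s' => s'.card + m ≤ k), Wt q F s' := by
      refine Finset.sum_congr rfl fun s' hs' => ?_
      rw [Finset.mem_filter] at hs'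
      have : φk (s' ∪ T) = 1 := by
        rw [hφdef]
        simp only
        rw [if_pos]
        rw [hcard_union s' hs'.1]
        exact hs'.2
      rw [this, mul_one]
    have hbadzero : ∑ s' ∈ F.powerset.filter (fun s' => ¬ (s'.card + m ≤ k)),
        Wt q F s' * φk (s' ∪ T)
        = 0 := by
      refine Finset.sum_eq_zero fun s' hs' => ?_
      rw [Finset.mem_filter] at hs'
      have : φk (s' ∪ T) = 0 := by
        rw [hφdef]
        simp only
        rw [if_neg]
        rw [hcard_union s' hs'.1]
        exact hs'.2
      rw [this, mul_zero]
    have hgoodsum : ∑ s' ∈ F.powerset.filter (fun s' => s'.card + m ≤ k), Wt q F s'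
        = 1 - ∑ s' ∈ F.powerset.filter (fun s' => ¬ (s'.card + m ≤ k)), Wt q F s' := by
      have h2 := Finset.sum_filter_add_sum_filter_not F.powerset
        (fun s' => s'.card + m ≤ k) (fun s' => Wt q F s')
      rw [Wt_sum_one q F] at h2
      linarith
    have hbad : ∑ s' ∈ F.powerset.filter (fun s' => ¬ (s'.card + m ≤ k)), Wt q F s' ≤ η := by
      have hsub2 : F.powerset.filter (fun s' => ¬ (s'.card + m ≤ k))
          ⊆ F.powerset.filter (fun s' => ((k:ℝ) - m) ≤ (s'.card : ℝ)) := by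
        intro s' hs'
        rw [Finset.mem_filter] at hs' ⊢
        refine ⟨hs'.1, ?_⟩
        have := hs'.2
        have h3 : k < s'.card + m := by omega
        have h4 : (k:ℝ) < (s'.card : ℝ) + (m:ℝ) := by exact_mod_cast h3
        linarith
      have hchain : ∑ s' ∈ F.powerset.filter (fun s' => ¬ (s'.card + m ≤ k)), Wt q F s'
          ≤ ∑ s' ∈ F.powerset.filter (fun s' => ((k:ℝ) - m) ≤ (s'.card : ℝ)), Wt q F s' :=
        Finset.sum_le_sum_of_subset_of_nonneg hsub2
          (fun s' _ _ => Wt_nonneg hq0 hq1 F s')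
      have hB : ∑ i ∈ F, q i ≤ (1-u) * (k:ℝ) := by
        rw [← hqsum]
        exact Finset.sum_le_sum_of_subset_of_nonneg (Finset.subset_univ F)
          (fun i _ _ => hq0 i)
      have hcher := Wt_chernoff hq0 hq1 F u ((1-u) * (k:ℝ)) ((k:ℝ) - m) hu0.le hB
      calc ∑ s' ∈ F.powerset.filter (fun s' => ¬ (s'.card + m ≤ k)), Wt q F s'
          ≤ ∑ s' ∈ F.powerset.filter (fun s' => ((k:ℝ) - m) ≤ (s'.card : ℝ)), Wt q F s' :=
            hchain
        _ ≤ Real.exp ((1-u) * (k:ℝ) * (Real.exp u - 1) - u * ((k:ℝ) - m)) := hcher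
        _ = η := by rw [hηdef]
    calc 1 - η ≤ 1 - ∑ s' ∈ F.powerset.filter (fun s' => ¬ (s'.card + m ≤ k)), Wt q F s' := by
          linarith
      _ = ∑ s' ∈ F.powerset.filter (fun s' => s'.card + m ≤ k), Wt q F s' := hgoodsum.symm
      _ = ∑ s' ∈ F.powerset.filter (fun s' => s'.card + m ≤ k), Wt q F s' * φk (s' ∪ T) :=
          hgood.symm
      _ ≤ ∑ s' ∈ F.powerset, Wt q F s' * φk (s' ∪ T) := by
          apply Finset.sum_le_sum_of_subset_of_nonneg (Finset.filter_subset _ _)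
          intro s' _ _
          apply mul_nonneg (Wt_nonneg hq0 hq1 F s')
          rw [hφdef]
          simp only
          split <;> norm_num
  -- Step 4 : put everything together
  have hprod : ∀ T ∈ 𝒯, (∏ i ∈ T, q i) = (1-u)^m * ∏ i ∈ T, x i := by
    intro T hT
    have hTm : T.card = m := Finset.mem_powersetCard_univ.mp hT
    rw [show (∏ i ∈ T, q i) = ∏ i ∈ T, ((1-u) * x i) from rfl,
      Finset.prod_mul_distrib, Finset.prod_const, hTm]
  have main4 : (1 - η) * (1-u)^m * (∑ T ∈ 𝒯, (∏ i ∈ T, x i) * c T) ≤ X := by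
    rw [main2]
    have : (1 - η) * (1-u)^m * (∑ T ∈ 𝒯, (∏ i ∈ T, x i) * c T)
        = ∑ T ∈ 𝒯, c T * ((∏ i ∈ T, q i) * (1 - η)) := by
      rw [Finset.mul_sum]
      refine Finset.sum_congr rfl fun T hT => ?_
      rw [hprod T hT]
      ring
    rw [this]
    apply Finset.sum_le_sum
    intro T hT
    exact mul_le_mul_of_nonneg_left (main3 T hT) (hcnn T)
  -- scalar inequality
  have hscal : (1-ε)^m ≤ (1 - η) * (1-u)^m := by
    have h1 : ((1-ε)/(1-u))^m ≤ 1 - η := by linarith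
    have h2 : ((1-ε)/(1-u))^m * (1-u)^m = (1-ε)^m := by
      rw [← mul_pow, div_mul_cancel₀]
      exact h1u.ne'
    calc (1-ε)^m = ((1-ε)/(1-u))^m * (1-u)^m := h2.symm
      _ ≤ (1 - η) * (1-u)^m := by
          apply mul_le_mul_of_nonneg_right h1 (pow_nonneg h1u.le m)
  have hCBx : (∑ i, x i • vecMulVec (a i) (a i)).det
      = ∑ T ∈ 𝒯, (∏ i ∈ T, x i) * c T := cauchy_binet a x
  have hsumnn : 0 ≤ ∑ T ∈ 𝒯, (∏ i ∈ T, x i) * c T :=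
    Finset.sum_nonneg fun T _ => mul_nonneg
      (Finset.prod_nonneg fun i _ => (hx i).1) (hcnn T)
  rw [ge_iff_le, hCBx]
  calc (1-ε)^m * (∑ T ∈ 𝒯, (∏ i ∈ T, x i) * c T)
      ≤ (1 - η) * (1-u)^m * (∑ T ∈ 𝒯, (∏ i ∈ T, x i) * c T) := by
        apply mul_le_mul_of_nonneg_right hscal hsumnn
    _ ≤ X := main4
    _ ≤ dS S₀ := main1
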